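/- For Shamir secret sharing: if the coefficients f_1, ..., f_h of the polynomial f(X) = s + f_1 X + ... + f_h X^h are chosen uniformly at random in F_p, then for any set of at most h distinct nonzero evaluation points, the joint distribution of the shares (f(i)) at those points is uniform on F_p^h and in particular independent of the secret s. -/

import Mathlib

/-- Privacy of Shamir secret sharing: with uniformly random coefficients
`c : Fin h → F_p` for `f(X) = s + ∑ c j · X^(j+1)`, for any set `T` of at most
`h` distinct nonzero evaluation points and any target share values `v`, the
number of coefficient vectors realizing those shares is `p^(h - |T|)` — in
particular independent of the secret `s`, so the shares are jointly uniform. -/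
theorem shamir_privacy (p h : ℕ) [Fact p.Prime] (s : ZMod p)
    (T : Finset (ZMod p)) (hT : T.card ≤ h) (h0 : (0 : ZMod p) ∉ T)
    (v : ZMod p → ZMod p) :
    (Finset.univ.filter (fun c : Fin h → ZMod p =>
        ∀ i ∈ T, s + ∑ j, c j * i ^ ((j : ℕ) + 1) = v i)).card
      = p ^ (h - T.card) := by
  classical
  set L : (Fin h → ZMod p) →ₗ[ZMod p] (T → ZMod p) :=
    { toFun := fun c i => ∑ j, c j * (i : ZMod p) ^ ((j : ℕ) + 1)
      map_add' := by
        intro a b; funext i; simp [add_mul, Finset.sum_add_distrib]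
      map_smul' := by
        intro m a; funext i; simp [Finset.mul_sum, mul_assoc] } with hL
  have hsurj : Function.Surjective L := by
    rcases Finset.eq_empty_or_nonempty T with rfl | hTne
    · intro w
      exact ⟨0, funext fun i => absurd i.2 (Finset.notMem_empty _)⟩
    · have hh : 0 < h := lt_of_lt_of_le (Finset.card_pos.mpr hTne) hT
      intro w
      set r : ZMod p → ZMod p :=
        fun x => x⁻¹ * (if hx : x ∈ T then w ⟨x, hx⟩ else 0) with hr
      set q := Lagrange.interpolate T id r with hq
      have hinj : Set.InjOn (id : ZMod p → ZMod p) T := Set.injOn_id _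
      have hdeg : q.natDegree < h := by
        rcases eq_or_ne q 0 with h' | h'
        · rw [h', Polynomial.natDegree_zero]; exact hh
        · have hd := Lagrange.degree_interpolate_lt r hinj
          have := (Polynomial.natDegree_lt_iff_degree_lt h').mpr
            (lt_of_lt_of_le hd (by exact_mod_cast hT))
          exact this
      refine ⟨fun j => q.coeff j, ?_⟩
      funext i
      have hiT : (i : ZMod p) ∈ T := i.2
      have hi0 : (i : ZMod p) ≠ 0 := fun hc => h0 (hc ▸ hiT)
      have heval : q.eval (i : ZMod p) = r i := by
        exact Lagrange.eval_interpolate_at_node r hinj hiT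
      have hsum : ∑ j : Fin h, q.coeff j * (i : ZMod p) ^ ((j : ℕ) + 1)
          = (i : ZMod p) * q.eval (i : ZMod p) := by
        rw [Polynomial.eval_eq_sum_range' hdeg, Finset.mul_sum,
          ← Fin.sum_univ_eq_sum_range
            (fun j => (i : ZMod p) * (q.coeff j * (i : ZMod p) ^ j))]
        apply Finset.sum_congr rfl
        intro j _
        ring
      show ∑ j : Fin h, q.coeff j * (i : ZMod p) ^ ((j : ℕ) + 1) = w i
      rw [hsum, heval, hr]
      simp only [dif_pos hiT]
      rw [← mul_assoc, mul_inv_cancel₀ hi0, one_mul]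
  -- target vector
  set w0 : T → ZMod p := fun i => v i - s with hw0
  obtain ⟨c0, hc0⟩ := hsurj w0
  -- the filter set is a coset of the kernel
  have hset : (Finset.univ.filter (fun c : Fin h → ZMod p =>
        ∀ i ∈ T, s + ∑ j, c j * i ^ ((j : ℕ) + 1) = v i))
      = (Finset.univ.filter (fun c : Fin h → ZMod p => L c = 0)).image
          (fun c => c + c0) := by
    ext c
    simp only [Finset.mem_filter, Finset.mem_univ, true_and, Finset.mem_image]
    constructor
    · intro hc
      refine ⟨c - c0, ?_, by abel⟩
      rw [map_sub, hc0, sub_eq_zero]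
      funext i
      have := hc i i.2
      simp only [hw0, hL, LinearMap.coe_mk, AddHom.coe_mk]
      rw [← this]; ring
    · rintro ⟨d, hd, rfl⟩
      intro i hiT
      have hLi := congrFun hd ⟨i, hiT⟩
      have hL0 := congrFun hc0 ⟨i, hiT⟩
      simp only [hL, LinearMap.coe_mk, AddHom.coe_mk, Pi.zero_apply] at hLi hL0
      simp only [hw0] at hL0
      have : ∑ j, (d + c0) j * i ^ ((j : ℕ) + 1)
          = (∑ j, d j * i ^ ((j : ℕ) + 1)) + ∑ j, c0 j * i ^ ((j : ℕ) + 1) := by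
        rw [← Finset.sum_add_distrib]
        apply Finset.sum_congr rfl
        intro j _; simp [add_mul]
      rw [this, hLi, hL0]; ring
  rw [hset, Finset.card_image_of_injective _ (add_left_injective c0)]
  -- kernel cardinality
  have hker : (Finset.univ.filter (fun c : Fin h → ZMod p => L c = 0)).card
      = Fintype.card (LinearMap.ker L) := by
    rw [Fintype.card_subtype]
    apply Finset.card_bij (fun c _ => c) <;> simp [LinearMap.mem_ker]
  rw [hker]
  have hrange : LinearMap.range L = ⊤ := LinearMap.range_eq_top.mpr hsurj
  have hrank : Module.finrank (ZMod p) (LinearMap.ker L) = h - T.card := by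
    have h1 := LinearMap.finrank_range_add_finrank_ker L
    rw [hrange] at h1
    have h2 : Module.finrank (ZMod p) (⊤ : Submodule (ZMod p) (T → ZMod p))
        = T.card := by
      rw [finrank_top, Module.finrank_pi, Fintype.card_coe]
    have h3 : Module.finrank (ZMod p) (Fin h → ZMod p) = h := by
      rw [Module.finrank_pi, Fintype.card_fin]
    omega
  have := Module.card_eq_pow_finrank (K := ZMod p) (V := LinearMap.ker L)
  rw [this, ZMod.card, hrank]
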